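/- Let p be a prime, m ≥ 1 an integer, 0 ≤ r ≤ m(p−1), and w an integer, and suppose Δ_p(m, r, w) > 0. Then the minimum of #{v ∈ 𝔽_p^m : |v|_M > w and f(v) ≠ 0} over all nonzero reduced polynomials f ∈ 𝔽_p[x_1,…,x_m] of total degree at most r equals Δ_p(m, r, w). (That is, the distance of the punctured Reed–Muller code PRM_p(r, m, w), punctured at all points of Manhattan weight at most w, is Δ_p(m, r, w).) -/

import Mathlib

/-- The `p`-nomial coefficient `C(m,s)_p`: the coefficient of `x^s` in
`(1 + x + ⋯ + x^{p−1})^m ∈ ℤ[x]`, extended by `0` for `s < 0`. -/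
noncomputable def pnomial (p m : ℕ) (s : ℤ) : ℤ :=
  if 0 ≤ s then
    ((∑ i ∈ Finset.range p, (Polynomial.X : Polynomial ℤ) ^ i) ^ m).coeff s.toNat
  else 0

/-- `C(m,>s)_p = ∑_{i>s} C(m,i)_p`.  Since `C(m,i)_p = 0` for `i > m(p−1)`,
the sum may be truncated at `m(p−1)`. -/
noncomputable def pnomialGT (p m : ℕ) (s : ℤ) : ℤ :=
  ∑ i ∈ Finset.range (m * (p - 1) + 1), if s < (i : ℤ) then pnomial p m i else 0

/-- `Δ_p(m,r,w)`: writing `r = α(p−1)+β` with `0 ≤ β ≤ p−2` (so `α = r/(p−1)`,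
`β = r % (p−1)`), this is `C(m−α,>w)_p` if `β = 0`, and
`C(m−α,>w)_p − ∑_{j=p−β}^{p−1} C(m−α−1,>w−j)_p` otherwise. -/
noncomputable def Δp (p m r : ℕ) (w : ℤ) : ℤ :=
  if r % (p - 1) = 0 then pnomialGT p (m - r / (p - 1)) w
  else pnomialGT p (m - r / (p - 1)) w -
    ∑ j ∈ Finset.Icc (p - r % (p - 1)) (p - 1),
      pnomialGT p (m - r / (p - 1) - 1) (w - (j : ℤ))

/-- The Manhattan weight `|v|_M = ∑ i, val(v_i)` of a vector `v ∈ 𝔽_p^m`. -/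
def manhattanWeight {p m : ℕ} (v : Fin m → ZMod p) : ℕ := ∑ i, (v i).val

set_option linter.unusedSectionVars false
set_option maxHeartbeats 1000000

namespace PRMaux
open Finset MvPolynomial

variable {p : ℕ} [hp : Fact p.Prime]

lemma card_val_filter (q : ℕ → Prop) [DecidablePred q] :
    (univ.filter fun x : ZMod p => q x.val).card = ((Finset.range p).filter q).card := by
  apply Finset.card_nbij (fun x => x.val)
  · intro x hx
    exact Finset.mem_filter.2 ⟨Finset.mem_range.2 (ZMod.val_lt x), (Finset.mem_filter.1 hx).2⟩
  · intro a ha b hb hab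
    exact ZMod.val_injective p hab
  · intro n hn
    simp only [Finset.coe_filter, Set.mem_setOf_eq, Finset.mem_range, Set.mem_image,
      mem_univ, true_and] at hn ⊢
    exact ⟨(n : ZMod p), by rw [ZMod.val_cast_of_lt hn.1]; exact ⟨hn.2, rfl⟩⟩

lemma sum_val {M : Type*} [AddCommMonoid M] (H : ℕ → M) :
    ∑ x : ZMod p, H x.val = ∑ n ∈ Finset.range p, H n := by
  apply Finset.sum_nbij (fun x => x.val)
  · intro x _; exact Finset.mem_range.2 (ZMod.val_lt x)
  · intro a _ b _ hab; exact ZMod.val_injective p hab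
  · intro n hn
    simp only [Finset.coe_range, Set.mem_Iio, Set.mem_image, Finset.mem_coe, mem_univ,
      true_and] at hn ⊢
    exact ⟨(n : ZMod p), ZMod.val_cast_of_lt hn⟩
  · intro x _; rfl

lemma weight_cons {m : ℕ} (x : ZMod p) (u : Fin m → ZMod p) :
    manhattanWeight (Fin.cons x u) = x.val + manhattanWeight u := by
  simp [manhattanWeight, Fin.sum_univ_succ]

lemma weight_le {m : ℕ} (v : Fin m → ZMod p) : manhattanWeight v ≤ m * (p - 1) := by
  calc manhattanWeight v ≤ ∑ _i : Fin m, (p-1) := Finset.sum_le_sum fun i _ => by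
        have := ZMod.val_lt (v i); omega
    _ = m * (p-1) := by simp [Finset.sum_const, mul_comm]

lemma sum_pi_succ {X M : Type*} [Fintype X] [AddCommMonoid M] {m : ℕ}
    (F : (Fin (m+1) → X) → M) : ∑ v, F v = ∑ x : X, ∑ u : Fin m → X, F (Fin.cons x u) := by
  have h1 : ∑ v : Fin (m+1) → X, F v
      = ∑ q : X × (Fin m → X), F (Fin.cons q.1 q.2) :=
    (Fintype.sum_equiv (Fin.consEquiv (fun _ => X)) _ _ (fun q => rfl)).symm
  rw [h1, Fintype.sum_prod_type]

variable (p) in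
def G (m : ℕ) (w : ℤ) : ℕ :=
  (univ.filter fun v : Fin m → ZMod p => w < (manhattanWeight v : ℤ)).card

variable (p) in
def ncnt (m n : ℕ) : ℕ :=
  (univ.filter fun v : Fin m → ZMod p => manhattanWeight v = n).card

lemma G_zero (w : ℤ) : G p 0 w = if w < 0 then 1 else 0 := by
  unfold G
  rcases lt_or_ge w 0 with h | h
  · rw [if_pos h, Finset.filter_true_of_mem, Finset.card_univ]
    · simp
    · intro v _
      simpa [manhattanWeight] using h
  · rw [if_neg (not_lt.2 h), Finset.card_eq_zero, Finset.filter_eq_empty_iff]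
    intro v _
    simp only [manhattanWeight, Finset.univ_eq_empty, Finset.sum_empty, Nat.cast_zero]
    omega

lemma G_succ (m : ℕ) (w : ℤ) : G p (m+1) w = ∑ n ∈ Finset.range p, G p m (w - n) := by
  rw [← sum_val (p := p) (fun n => G p m (w - n))]
  unfold G
  rw [Finset.card_filter, sum_pi_succ]
  refine Finset.sum_congr rfl fun x _ => ?_
  rw [Finset.card_filter]
  refine Finset.sum_congr rfl fun u _ => ?_
  rw [weight_cons]
  have : (w < ((x.val + manhattanWeight u : ℕ) : ℤ)) ↔
      (w - x.val < (manhattanWeight u : ℤ)) := by push_cast; omega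
  simp only [this]

lemma ncnt_zero (n : ℕ) : ncnt p 0 n = if n = 0 then 1 else 0 := by
  unfold ncnt
  rcases eq_or_ne n 0 with h | h
  · subst h
    rw [if_pos rfl, Finset.filter_true_of_mem, Finset.card_univ]
    · simp
    · intro v _; simp [manhattanWeight]
  · rw [if_neg h, Finset.card_eq_zero, Finset.filter_eq_empty_iff]
    intro v _
    simp only [manhattanWeight, Finset.univ_eq_empty, Finset.sum_empty]
    omega

lemma ncnt_succ (m n : ℕ) :
    ncnt p (m+1) n = ∑ i ∈ Finset.range p, if i ≤ n then ncnt p m (n - i) else 0 := by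
  rw [← sum_val (p := p) (fun i => if i ≤ n then ncnt p m (n - i) else 0)]
  unfold ncnt
  rw [Finset.card_filter, sum_pi_succ]
  refine Finset.sum_congr rfl fun x _ => ?_
  rcases le_or_gt x.val n with h | h
  · rw [if_pos h, Finset.card_filter]
    refine Finset.sum_congr rfl fun u _ => ?_
    rw [weight_cons]
    have : (x.val + manhattanWeight u = n) ↔ (manhattanWeight u = n - x.val) := by omega
    simp only [this]
  · rw [if_neg (not_le.2 h)]
    refine Finset.sum_eq_zero fun u _ => ?_
    rw [weight_cons, if_neg (by omega)]

lemma coeff_pow_sum (m n : ℕ) :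
    ((∑ i ∈ Finset.range p, (Polynomial.X : Polynomial ℤ) ^ i) ^ m).coeff n
      = ncnt p m n := by
  induction m generalizing n with
  | zero =>
    rw [pow_zero, Polynomial.coeff_one, ncnt_zero]
    split_ifs with h1 h2 h2 <;> simp_all <;> omega
  | succ m ih =>
    rw [pow_succ, Finset.mul_sum, Polynomial.finset_sum_coeff, ncnt_succ]
    push_cast
    refine Finset.sum_congr rfl fun i _ => ?_
    rw [Polynomial.coeff_mul_X_pow']
    split_ifs with h
    · rw [ih]
    · simp

lemma pnomialGT_eq (m : ℕ) (w : ℤ) : pnomialGT p m w = (G p m w : ℤ) := by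
  have hG : G p m w = ∑ i ∈ Finset.range (m * (p-1) + 1),
      if w < (i:ℤ) then ncnt p m i else 0 := by
    unfold G
    rw [Finset.card_filter]
    have : ∀ i ∈ Finset.range (m * (p-1) + 1),
        (if w < (i:ℤ) then ncnt p m i else 0)
          = ∑ v : Fin m → ZMod p, if manhattanWeight v = i ∧ w < (i:ℤ) then 1 else 0 := by
      intro i _
      rcases lt_or_ge w i with h | h
      · rw [if_pos h]
        unfold ncnt
        rw [Finset.card_filter]
        refine Finset.sum_congr rfl fun v _ => ?_
        simp [h]
      · rw [if_neg (not_lt.2 h)]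
        refine (Finset.sum_eq_zero fun v _ => ?_).symm
        rw [if_neg]; rintro ⟨-, h2⟩; omega
    rw [Finset.sum_congr rfl this, Finset.sum_comm]
    refine Finset.sum_congr rfl fun v _ => ?_
    rcases lt_or_ge w (manhattanWeight v : ℤ) with h | h
    · rw [if_pos h]
      have hs := Finset.sum_eq_single_of_mem
        (f := fun i : ℕ => if manhattanWeight v = i ∧ w < (i:ℤ) then (1:ℕ) else 0)
        (s := Finset.range (m * (p - 1) + 1))
        (manhattanWeight v)
        (Finset.mem_range.2 (by have := weight_le v; omega))
        (fun i _ hne => by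
          simp only [ite_eq_right_iff]
          rintro ⟨h1, -⟩; exact absurd h1.symm hne)
      rw [hs]
      simp [h]
    · rw [if_neg (not_lt.2 h)]
      refine (Finset.sum_eq_zero fun i _ => ?_).symm
      rw [if_neg]; rintro ⟨h1, h2⟩; rw [h1] at h; omega
  rw [hG]
  unfold pnomialGT
  push_cast
  refine Finset.sum_congr rfl fun i hi => ?_
  split_ifs with h
  · unfold pnomial
    rw [if_pos (by positivity), Int.toNat_natCast, coeff_pow_sum]
  · rfl

variable (p) in
def inS (r : ℕ) {m : ℕ} (v : Fin m → ZMod p) : Prop :=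
  ∀ i : Fin m, (v i).val ≤ ((i : ℕ) + 1) * (p - 1) - r

instance {r m : ℕ} (v : Fin m → ZMod p) : Decidable (inS p r v) :=
  inferInstanceAs (Decidable (∀ i : Fin m, (v i).val ≤ ((i : ℕ) + 1) * (p - 1) - r))

variable (p) in
def Dc (m r : ℕ) (w : ℤ) : ℕ :=
  (univ.filter fun v : Fin m → ZMod p =>
    inS p r v ∧ w < (manhattanWeight v : ℤ)).card

lemma inS_zero {m : ℕ} (v : Fin m → ZMod p) : inS p 0 v := by
  intro i
  have h1 := ZMod.val_lt (v i)
  have h2 : 1 * (p-1) ≤ ((i:ℕ)+1) * (p-1) := Nat.mul_le_mul_right _ (by omega)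
  omega

lemma Dc_zero_r (m : ℕ) (w : ℤ) : Dc p m 0 w = G p m w := by
  unfold Dc G
  congr 1
  apply Finset.filter_congr
  intro v _
  simp [inS_zero v]

lemma Dc_zero_m (r : ℕ) (w : ℤ) : Dc p 0 r w = G p 0 w := by
  unfold Dc G
  congr 1
  apply Finset.filter_congr
  intro v _
  have : inS p r v := fun i => i.elim0
  simp [this]

lemma inS_cons_big {m r : ℕ} (h : p - 1 ≤ r) (x : ZMod p) (u : Fin m → ZMod p) :
    inS p r (Fin.cons x u) ↔ x = 0 ∧ inS p (r - (p-1)) u := by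
  constructor
  · intro hv
    constructor
    · have h0 := hv 0
      simp only [Fin.val_zero, zero_add, one_mul] at h0
      have : (p - 1) - r = 0 := by omega
      rw [this, Nat.le_zero] at h0
      exact (ZMod.val_eq_zero x).1 h0
    · intro j
      have hj := hv j.succ
      simp only [Fin.cons_succ, Fin.val_succ] at hj
      have e : ((j:ℕ) + 1 + 1) * (p - 1) = ((j:ℕ) + 1) * (p-1) + (p-1) := by ring
      rw [e] at hj
      have : ((j:ℕ)+1) * (p-1) + (p-1) - r = ((j:ℕ)+1)*(p-1) - (r - (p-1)) := by omega
      rw [this] at hj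
      exact hj
  · rintro ⟨hx, hu⟩ i
    refine Fin.cases ?_ ?_ i
    · simp [hx]
    · intro j
      have hj := hu j
      simp only [Fin.cons_succ, Fin.val_succ]
      have e : ((j:ℕ) + 1 + 1) * (p - 1) = ((j:ℕ) + 1) * (p-1) + (p-1) := by ring
      omega

lemma inS_cons_small {m r : ℕ} (h : r ≤ p - 1) (x : ZMod p) (u : Fin m → ZMod p) :
    inS p r (Fin.cons x u) ↔ x.val ≤ p - 1 - r := by
  constructor
  · intro hv
    have h0 := hv 0
    simpa using h0
  · intro hx i
    refine Fin.cases ?_ ?_ i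
    · simpa using hx
    · intro j
      simp only [Fin.cons_succ, Fin.val_succ]
      have h1 := ZMod.val_lt (u j)
      have e : ((j:ℕ) + 1 + 1) * (p - 1) = ((j:ℕ) + 1) * (p-1) + (p-1) := by ring
      have h2 : 1 * (p-1) ≤ ((j:ℕ)+1) * (p-1) := Nat.mul_le_mul_right _ (by omega)
      omega

lemma Dc_R1 {m r : ℕ} (h : p - 1 ≤ r) (w : ℤ) :
    Dc p (m+1) r w = Dc p m (r - (p-1)) w := by
  unfold Dc
  rw [Finset.card_filter, Finset.card_filter, sum_pi_succ]
  rw [Finset.sum_eq_single_of_mem (0 : ZMod p) (Finset.mem_univ 0)]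
  · refine Finset.sum_congr rfl fun u _ => ?_
    have h2 : (inS p r (Fin.cons (0:ZMod p) u) ∧
        w < (manhattanWeight (Fin.cons (0:ZMod p) u) : ℤ)) ↔
        (inS p (r - (p-1)) u ∧ w < (manhattanWeight u : ℤ)) := by
      rw [inS_cons_big h, weight_cons, ZMod.val_zero]
      simp
    simp only [h2]
  · intro x _ hx
    refine Finset.sum_eq_zero fun u _ => ?_
    rw [if_neg]
    rintro ⟨hS, -⟩
    exact hx ((inS_cons_big h x u).1 hS).1

lemma Dc_R2 {m r : ℕ} (h : r ≤ p - 1) (w : ℤ) :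
    Dc p (m+1) r w = ∑ n ∈ Finset.range (p - r), G p m (w - n) := by
  unfold Dc
  rw [Finset.card_filter, sum_pi_succ]
  have key : ∀ x : ZMod p,
      (∑ u : Fin m → ZMod p, if inS p r (Fin.cons x u) ∧
          w < (manhattanWeight (Fin.cons x u) : ℤ) then 1 else 0)
        = if x.val ≤ p - 1 - r then G p m (w - x.val) else 0 := by
    intro x
    rcases le_or_gt x.val (p - 1 - r) with hx | hx
    · rw [if_pos hx]
      unfold G
      rw [Finset.card_filter]
      refine Finset.sum_congr rfl fun u _ => ?_
      rw [weight_cons]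
      have h1 : inS p r (Fin.cons x u) := (inS_cons_small h x u).2 hx
      have h2 : (inS p r (Fin.cons x u) ∧
          w < ((x.val + manhattanWeight u : ℕ) : ℤ)) ↔
          (w - (x.val : ℤ) < (manhattanWeight u : ℤ)) := by
        constructor
        · rintro ⟨-, h'⟩
          push_cast at h' ⊢; omega
        · intro h'
          refine ⟨h1, ?_⟩
          push_cast at h' ⊢; omega
      simp only [h2]
    · rw [if_neg (by omega)]
      refine Finset.sum_eq_zero fun u _ => ?_
      rw [if_neg]
      rintro ⟨hS, -⟩
      exact absurd ((inS_cons_small h x u).1 hS) (by omega)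
  rw [Finset.sum_congr rfl (fun x _ => key x)]
  rw [sum_val (p := p) (fun n => if n ≤ p - 1 - r then G p m (w - n) else 0)]
  rw [← Finset.sum_filter]
  apply Finset.sum_congr
  · ext n
    simp only [Finset.mem_filter, Finset.mem_range]
    have hp2 : 2 ≤ p := hp.out.two_le
    omega
  · intro n _; rfl

lemma Dc_closed {m r : ℕ} (hr : r ≤ m * (p-1)) (hα : r / (p-1) < m) (w : ℤ) :
    Dc p m r w = ∑ n ∈ Finset.range (p - r % (p-1)),
      G p (m - r/(p-1) - 1) (w - n) := by
  have hp2 : 2 ≤ p := hp.out.two_le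
  induction m generalizing r w with
  | zero => exact absurd hα (Nat.not_lt_zero _)
  | succ m ih =>
    rcases le_or_gt (p-1) r with h | h
    · rw [Dc_R1 h]
      have e1 : r = (r - (p-1)) + (p-1) := by omega
      have hd : r / (p-1) = (r - (p-1))/(p-1) + 1 := by
        conv_lhs => rw [e1]
        rw [Nat.add_div_right _ (by omega)]
      have hm : r % (p-1) = (r - (p-1)) % (p-1) := by
        conv_lhs => rw [e1]
        rw [Nat.add_mod_right]
      have hr' : r - (p-1) ≤ m * (p-1) := by
        have : (m+1) * (p-1) = m * (p-1) + (p-1) := by ring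
        omega
      have hα' : (r - (p-1)) / (p-1) < m := by omega
      rw [ih hr' hα', hd, hm]
      refine Finset.sum_congr rfl fun n _ => ?_
      congr 1
      omega
    · rw [Dc_R2 (show r ≤ p - 1 by omega) w]
      rw [Nat.div_eq_of_lt h, Nat.mod_eq_of_lt h]
      simp

lemma Dc_top (m : ℕ) (w : ℤ) : Dc p m (m * (p-1)) w = G p 0 w := by
  induction m with
  | zero => exact Dc_zero_m (p := p) (0 * (p-1)) w
  | succ m ih =>
    have h : p - 1 ≤ (m+1) * (p-1) := by
      have : (m+1) * (p-1) = m * (p-1) + (p-1) := by ring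
      omega
    rw [Dc_R1 h]
    have : (m+1) * (p-1) - (p-1) = m * (p-1) := by
      have : (m+1) * (p-1) = m * (p-1) + (p-1) := by ring
      omega
    rw [this, ih]

lemma alpha_le {m r : ℕ} (hr : r ≤ m * (p-1)) : r / (p-1) ≤ m := by
  have hp2 : 2 ≤ p := hp.out.two_le
  have h1 : r / (p-1) ≤ m * (p-1) / (p-1) := Nat.div_le_div_right hr
  rwa [Nat.mul_div_cancel _ (by omega : 0 < p - 1)] at h1

lemma alpha_lt {m r : ℕ} (hr : r ≤ m * (p-1)) (hβ : r % (p-1) ≠ 0) :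
    r / (p-1) < m := by
  have hp2 : 2 ≤ p := hp.out.two_le
  rcases Nat.lt_or_ge (r / (p-1)) m with h | h
  · exact h
  · exfalso
    have h1 := alpha_le hr
    have h2 : r / (p-1) = m := le_antisymm h1 h
    have h3 : m * (p-1) ≤ r := by
      calc m * (p-1) = r / (p-1) * (p-1) := by rw [h2]
        _ ≤ r := Nat.div_mul_le_self r (p-1)
    have h4 : r = m * (p-1) := le_antisymm hr h3
    rw [h4, Nat.mul_mod_left] at hβ
    exact hβ rfl

lemma sum_split_G {k : ℕ} {β : ℕ} (hβ : β ≤ p - 1) (w : ℤ) :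
    (G p (k+1) w : ℤ) = (∑ n ∈ Finset.range (p - β), G p k (w - n) : ℤ)
      + ∑ j ∈ Finset.Icc (p - β) (p - 1), (G p k (w - j) : ℤ) := by
  have hp2 : 2 ≤ p := hp.out.two_le
  have h1 : G p (k+1) w = ∑ n ∈ Finset.range p, G p k (w - n) := G_succ k w
  have h2 : Finset.range p = Finset.range (p - β) ∪ Finset.Icc (p - β) (p-1) := by
    ext n
    simp only [Finset.mem_range, Finset.mem_union, Finset.mem_Icc]
    omega
  have h3 : Disjoint (Finset.range (p - β)) (Finset.Icc (p - β) (p-1)) := by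
    rw [Finset.disjoint_left]
    intro n hn hn'
    simp only [Finset.mem_range] at hn
    simp only [Finset.mem_Icc] at hn'
    omega
  rw [h1, h2, Finset.sum_union h3]
  push_cast
  ring

lemma Δp_eq_Dc {m r : ℕ} (hr : r ≤ m * (p-1)) (w : ℤ) :
    Δp p m r w = (Dc p m r w : ℤ) := by
  have hp2 : 2 ≤ p := hp.out.two_le
  set α := r / (p-1) with hα
  set β := r % (p-1) with hβ
  have hdm : (p-1) * α + β = r := Nat.div_add_mod r (p-1)
  have hβlt : β < p - 1 := Nat.mod_lt _ (by omega)
  unfold Δp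
  rcases eq_or_ne β 0 with h0 | h0
  · rw [if_pos (hβ ▸ h0), pnomialGT_eq]
    rcases eq_or_ne α m with hm | hm
    · have hcm : (p-1) * m = m * (p-1) := Nat.mul_comm _ _
      have hrm : r = m * (p-1) := by rw [hm] at hdm; omega
      rw [← hα, hm]
      simp only [Nat.sub_self]
      rw [hrm, Dc_top]
    · have hαlt : α < m := lt_of_le_of_ne (alpha_le hr) hm
      rw [Dc_closed hr hαlt w, ← hα, ← hβ, h0, Nat.sub_zero]
      have e : m - α = (m - α - 1) + 1 := by omega
      rw [e, G_succ]
      norm_cast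
  · rw [if_neg (by rw [← hβ]; exact h0)]
    have hαlt : α < m := alpha_lt hr (hβ ▸ h0)
    rw [Dc_closed hr hαlt w, ← hα, ← hβ]
    have e : (m - α - 1) + 1 = m - α := by omega
    rw [pnomialGT_eq]
    have hG : ∀ j ∈ Finset.Icc (p - β) (p-1),
        pnomialGT p (m - α - 1) (w - (j:ℤ)) = (G p (m - α - 1) (w - (j:ℤ)) : ℤ) :=
      fun j _ => pnomialGT_eq _ _
    rw [Finset.sum_congr rfl hG]
    have hsplit := sum_split_G (k := m - α - 1) (β := β) (le_of_lt hβlt) w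
    rw [e] at hsplit
    rw [hsplit]
    push_cast
    ring

lemma box_inner (F : ℕ → ℕ) {a b : ℕ} (x : ℕ) (hx : x ≤ a) :
    ∑ y ∈ Finset.range (b+1), F (x+y)
      = ∑ s ∈ Finset.range (a+b+1), if x ≤ s ∧ s ≤ x + b then F s else 0 := by
  rw [← Finset.sum_filter]
  have h : (Finset.range (a+b+1)).filter (fun s => x ≤ s ∧ s ≤ x + b)
      = Finset.Ico x (x+b+1) := by
    ext s
    simp only [Finset.mem_filter, Finset.mem_range, Finset.mem_Ico]
    omega
  rw [h, Finset.sum_Ico_eq_sum_range]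
  have e : x + b + 1 - x = b + 1 := by omega
  rw [e]

lemma box_eq (F : ℕ → ℕ) (a b : ℕ) :
    ∑ x ∈ Finset.range (a+1), ∑ y ∈ Finset.range (b+1), F (x+y)
      = ∑ s ∈ Finset.range (a+b+1), (min s a + 1 - (s - b)) * F s := by
  have h1 : ∀ x ∈ Finset.range (a+1), ∑ y ∈ Finset.range (b+1), F (x+y)
      = ∑ s ∈ Finset.range (a+b+1), if x ≤ s ∧ s ≤ x + b then F s else 0 :=
    fun x hx => box_inner F x (Nat.lt_succ_iff.mp (Finset.mem_range.1 hx))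
  rw [Finset.sum_congr rfl h1, Finset.sum_comm]
  refine Finset.sum_congr rfl fun s hs => ?_
  rw [← Finset.sum_filter]
  have h2 : (Finset.range (a+1)).filter (fun x => x ≤ s ∧ s ≤ x + b)
      = Finset.Icc (s - b) (min s a) := by
    ext x
    simp only [Finset.mem_filter, Finset.mem_range, Finset.mem_Icc]
    omega
  rw [h2, Finset.sum_const, Nat.card_Icc, smul_eq_mul]

lemma box (F : ℕ → ℕ) {a b a' b' : ℕ} (hsum : a + b = a' + b')
    (hmin : min a b ≤ min a' b') :
    ∑ x ∈ Finset.range (a+1), ∑ y ∈ Finset.range (b+1), F (x+y)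
      ≤ ∑ x ∈ Finset.range (a'+1), ∑ y ∈ Finset.range (b'+1), F (x+y) := by
  rw [box_eq, box_eq, ← hsum]
  apply Finset.sum_le_sum
  intro s hs
  apply Nat.mul_le_mul_right
  simp only [Finset.mem_range] at hs
  omega

lemma divmod_char {q a b c : ℕ} (hq : 0 < q) (h : a = c + b * q) (hc : c < q) :
    a / q = b ∧ a % q = c := by
  subst h
  constructor
  · rw [Nat.add_mul_div_right _ _ hq, Nat.div_eq_of_lt hc, Nat.zero_add]
  · rw [Nat.add_mul_mod_self_right, Nat.mod_eq_of_lt hc]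

lemma G_shift (k : ℕ) (w : ℤ) (x y : ℕ) :
    G p k (w - x - y) = G p k (w - (x + y : ℕ)) := by
  congr 1
  push_cast
  ring

lemma star {m r t : ℕ} (hr : r ≤ (m+1) * (p-1)) (ht : t ≤ p - 1) (htr : t ≤ r) (w : ℤ) :
    Dc p (m+1) r w ≤ ∑ x ∈ Finset.range (p - t),
      Dc p m (min (r - t) (m * (p-1))) (w - x) := by
  have hp2 : 2 ≤ p := hp.out.two_le
  set α := r / (p-1) with hα
  set β := r % (p-1) with hβ
  have hdm : (p-1) * α + β = r := Nat.div_add_mod r (p-1)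
  have hdm' : α * (p-1) + β = r := by rw [Nat.mul_comm] at hdm; exact hdm
  have hβlt : β < p - 1 := Nat.mod_lt _ (by omega)
  have hm1 : (m+1) * (p-1) = m * (p-1) + (p-1) := Nat.succ_mul _ _
  have hαle : α ≤ m + 1 := alpha_le hr
  have hsa : 1 ≤ α → α * (p-1) = (α - 1) * (p-1) + (p-1) := by
    intro h
    calc α * (p-1) = ((α-1)+1) * (p-1) := by rw [Nat.sub_add_cancel h]
      _ = (α-1)*(p-1) + (p-1) := Nat.succ_mul _ _
  have hma : α ≤ m → α * (p-1) ≤ m * (p-1) := fun h => Nat.mul_le_mul_right _ h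
  have hma2 : α < m → α * (p-1) + (p-1) ≤ m * (p-1) := by
    intro h
    calc α * (p-1) + (p-1) = (α+1) * (p-1) := (Nat.succ_mul _ _).symm
      _ ≤ m * (p-1) := Nat.mul_le_mul_right _ h
  have hma3 : 1 ≤ α → α ≤ m → (α-1) * (p-1) + (p-1) ≤ m * (p-1) := by
    intro h1 h2
    have := hsa h1
    have := hma h2
    omega
  rcases eq_or_ne α (m+1) with htop | htop
  · -- r = (m+1)(p-1)
    have hrm : r = (m+1) * (p-1) := by
      have h2 : α * (p-1) ≤ r := by rw [hα]; exact Nat.div_mul_le_self r (p-1)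
      rw [htop] at h2
      omega
    have hρ : min (r - t) (m * (p-1)) = m * (p-1) := by omega
    rw [hρ, hrm, Dc_top]
    have h0 : (0:ℕ) ∈ Finset.range (p - t) := Finset.mem_range.2 (by omega)
    have h1 : G p 0 w = Dc p m (m * (p-1)) (w - ((0:ℕ):ℤ)) := by
      rw [Dc_top]; norm_num
    rw [h1]
    exact Finset.single_le_sum (f := fun x : ℕ => Dc p m (m * (p-1)) (w - (x:ℤ)))
      (fun x _ => Nat.zero_le _) h0
  · have hαm : α ≤ m := by omega
    have hRHS : Dc p (m+1) r w
        = ∑ y ∈ Finset.range (p - β), G p (m - α) (w - y) := by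
      rw [Dc_closed (by omega) (by omega) w]
      refine Finset.sum_congr (by rw [← hβ]) fun y _ => ?_
      rw [← hα]
      congr 1
      omega
    rcases le_or_gt t β with htβ | htβ
    · -- t ≤ β
      rcases eq_or_ne α m with hαm' | hαm'
      · -- α = m : ρ = m(p-1)
        have hρ : min (r - t) (m * (p-1)) = m * (p-1) := by
          rw [hαm'] at hdm'
          omega
        rw [hρ, hRHS, hαm']
        simp only [Nat.sub_self]
        have h1 : ∀ x ∈ Finset.range (p - t), Dc p m (m * (p-1)) (w - (x:ℕ))
            = G p 0 (w - x) := fun x _ => Dc_top m _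
        rw [Finset.sum_congr rfl h1]
        apply Finset.sum_le_sum_of_subset
        intro x hx
        simp only [Finset.mem_range] at hx ⊢
        omega
      · -- α < m
        have hαm2 : α < m := by omega
        have hq2 := hma2 hαm2
        have hρ : min (r - t) (m * (p-1)) = r - t := by omega
        have hdmρ : (r - t) / (p-1) = α ∧ (r - t) % (p-1) = β - t :=
          divmod_char (by omega) (by omega) (by omega)
        have hLHS : ∀ x : ℕ, Dc p m (min (r - t) (m * (p-1))) (w - x)
            = ∑ y ∈ Finset.range (p - (β - t)), G p (m - α - 1) (w - x - y) := by
          intro x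
          rw [hρ, Dc_closed (by omega) (by omega) (w - x)]
          rw [hdmρ.1, hdmρ.2]
        rw [Finset.sum_congr rfl fun x _ => hLHS x, hRHS]
        have hexp : ∀ y : ℕ, G p (m - α) (w - (y:ℕ))
            = ∑ z ∈ Finset.range p, G p (m - α - 1) (w - y - z) := by
          intro y
          have e : G p (m - α) (w - (y:ℕ)) = G p ((m - α - 1) + 1) (w - (y:ℕ)) := by
            congr 1
            omega
          rw [e, G_succ]
        rw [Finset.sum_congr rfl fun y _ => hexp y]
        have e1 : p - β = (p - 1 - β) + 1 := by omega
        have e2 : p = (p - 1) + 1 := by omega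
        have e3 : p - t = (p - 1 - t) + 1 := by omega
        have e4 : p - (β - t) = (p - 1 - (β - t)) + 1 := by omega
        have hb := box (fun s => G p (m - α - 1) (w - s))
          (a := p - 1 - β) (b := p - 1) (a' := p - 1 - t) (b' := p - 1 - (β - t))
          (by omega) (by omega)
        rw [← e1, ← e2, ← e3, ← e4] at hb
        calc ∑ y ∈ Finset.range (p - β), ∑ z ∈ Finset.range p,
              G p (m - α - 1) (w - y - z)
            = ∑ y ∈ Finset.range (p - β), ∑ z ∈ Finset.range p,
              (fun s => G p (m - α - 1) (w - s)) (y + z) := by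
              refine Finset.sum_congr rfl fun y _ => Finset.sum_congr rfl fun z _ => ?_
              exact G_shift (m - α - 1) w y z
          _ ≤ ∑ x ∈ Finset.range (p - t), ∑ y ∈ Finset.range (p - (β - t)),
              (fun s => G p (m - α - 1) (w - s)) (x + y) := hb
          _ = ∑ x ∈ Finset.range (p - t), ∑ y ∈ Finset.range (p - (β - t)),
              G p (m - α - 1) (w - x - y) := by
              refine Finset.sum_congr rfl fun x _ => Finset.sum_congr rfl fun y _ => ?_
              exact (G_shift (m - α - 1) w x y).symm
    · -- β < t
      have hα1 : 1 ≤ α :=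
        Nat.pos_of_ne_zero (fun h0 => by rw [h0] at hdm'; omega)
      have hq1 := hsa hα1
      have hq3 := hma3 hα1 hαm
      have hρ : min (r - t) (m * (p-1)) = r - t := by omega
      have hdmρ : (r - t) / (p-1) = α - 1 ∧ (r - t) % (p-1) = p - 1 - t + β :=
        divmod_char (by omega) (by omega) (by omega)
      have hidx : m - (α - 1) - 1 = m - α := by omega
      have hLHS : ∀ x : ℕ, Dc p m (min (r - t) (m * (p-1))) (w - x)
          = ∑ y ∈ Finset.range (t - β + 1), G p (m - α) (w - x - y) := by
        intro x
        rw [hρ, Dc_closed (by omega) (by omega) (w - x), hdmρ.1, hdmρ.2, hidx]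
        refine Finset.sum_congr (by congr 1; omega) fun y _ => rfl
      rw [Finset.sum_congr rfl fun x _ => hLHS x, hRHS]
      have e3 : p - t = (p - 1 - t) + 1 := by omega
      have e1 : p - β = (p - 1 - β) + 1 := by omega
      have hb := box (fun s => G p (m - α) (w - s))
        (a := 0) (b := p - 1 - β) (a' := p - 1 - t) (b' := t - β)
        (by omega) (by omega)
      rw [← e1, ← e3] at hb
      calc ∑ y ∈ Finset.range (p - β), G p (m - α) (w - y)
          = ∑ x ∈ Finset.range (0+1), ∑ y ∈ Finset.range (p - β),
            (fun s => G p (m - α) (w - s)) (x + y) := by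
            rw [Finset.range_one, Finset.sum_singleton]
            refine Finset.sum_congr rfl fun y _ => ?_
            simp
        _ ≤ ∑ x ∈ Finset.range (p - t), ∑ y ∈ Finset.range (t - β + 1),
            (fun s => G p (m - α) (w - s)) (x + y) := hb
        _ = ∑ x ∈ Finset.range (p - t), ∑ y ∈ Finset.range (t - β + 1),
            G p (m - α) (w - x - y) := by
            refine Finset.sum_congr rfl fun x _ => Finset.sum_congr rfl fun y _ => ?_
            exact (G_shift (m - α) w x y).symm

lemma totalDegree_le_reduced {m : ℕ} (g : MvPolynomial (Fin m) (ZMod p))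
    (h : ∀ i, g.degreeOf i ≤ p - 1) : g.totalDegree ≤ m * (p-1) := by
  have hTD : g.totalDegree = g.support.sup fun μ => μ.sum fun _ e => e := rfl
  rw [hTD]
  apply Finset.sup_le
  intro μ hμ
  have h2 : (μ.sum fun _ e => e) ≤ ∑ i : Fin m, μ i := by
    rw [Finsupp.sum]
    exact Finset.sum_le_sum_of_subset (Finset.subset_univ _)
  have h3 : ∀ i : Fin m, μ i ≤ p - 1 := by
    intro i
    refine le_trans ?_ (h i)
    rw [MvPolynomial.degreeOf_eq_sup i g]
    exact Finset.le_sup (f := fun μ3 => μ3 i) hμ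
  calc (μ.sum fun _ e => e) ≤ ∑ i : Fin m, μ i := h2
    _ ≤ ∑ _i : Fin m, (p-1) := Finset.sum_le_sum fun i _ => h3 i
    _ = m * (p-1) := by simp [Finset.sum_const, mul_comm]

lemma card_eval_zero_le {φ : Polynomial (ZMod p)} (hφ : φ ≠ 0) :
    (univ.filter fun x : ZMod p => Polynomial.eval x φ = 0).card ≤ φ.natDegree := by
  have h1 : (univ.filter fun x : ZMod p => Polynomial.eval x φ = 0)
      ⊆ φ.roots.toFinset := by
    intro x hx
    simp only [Finset.mem_filter, mem_univ, true_and] at hx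
    rw [Multiset.mem_toFinset, Polynomial.mem_roots hφ]
    exact hx
  calc (univ.filter fun x : ZMod p => Polynomial.eval x φ = 0).card
      ≤ φ.roots.toFinset.card := Finset.card_le_card h1
    _ ≤ Multiset.card φ.roots := Multiset.toFinset_card_le _
    _ ≤ φ.natDegree := Polynomial.card_roots' φ

lemma univar (φ : Polynomial (ZMod p)) (t : ℕ) (htp : t ≤ p - 1)
    (hdeg : φ.natDegree ≤ t) (hne : φ.coeff t ≠ 0) (s : ℤ) :
    ((Finset.range (p - t)).filter fun n : ℕ => s < (n:ℤ)).card
      ≤ (univ.filter fun x : ZMod p =>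
          s < (x.val : ℤ) ∧ Polynomial.eval x φ ≠ 0).card := by
  have hp2 : 2 ≤ p := hp.out.two_le
  have hφ : φ ≠ 0 := fun h => hne (by simp [h])
  set B := ((Finset.range (p - t)).filter fun n : ℕ => s < (n:ℤ)).card with hB
  rcases Nat.eq_zero_or_pos B with h0 | h0
  · omega
  · obtain ⟨n0, hn0⟩ := Finset.card_pos.1 h0
    simp only [Finset.mem_filter, Finset.mem_range] at hn0
    have hs : s < ((p - t : ℕ) : ℤ) := by
      have := hn0.2
      have := hn0.1
      omega
    have hA : ((Finset.range p).filter fun n : ℕ => s < (n:ℤ)).card = B + t := by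
      have hsplit : Finset.range p
          = Finset.range (p - t) ∪ Finset.Ico (p - t) p := by
        ext n
        simp only [Finset.mem_range, Finset.mem_union, Finset.mem_Ico]
        omega
      have hdisj : Disjoint (Finset.range (p - t)) (Finset.Ico (p - t) p) := by
        rw [Finset.disjoint_left]
        intro n hn hn'
        simp only [Finset.mem_range] at hn
        simp only [Finset.mem_Ico] at hn'
        omega
      rw [hsplit, Finset.filter_union,
        Finset.card_union_of_disjoint (Finset.disjoint_filter_filter hdisj)]
      congr 1
      rw [Finset.filter_true_of_mem, Nat.card_Ico]
      · omega
      · intro n hn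
        simp only [Finset.mem_Ico] at hn
        have : ((p - t : ℕ) : ℤ) ≤ (n : ℤ) := by exact_mod_cast hn.1
        omega
    have hval : (univ.filter fun x : ZMod p => s < (x.val:ℤ)).card = B + t := by
      rw [card_val_filter (q := fun n : ℕ => s < (n:ℤ))]
      exact hA
    have hsub : (univ.filter fun x : ZMod p => s < (x.val:ℤ))
        ⊆ (univ.filter fun x : ZMod p => s < (x.val:ℤ) ∧ Polynomial.eval x φ ≠ 0)
          ∪ (univ.filter fun x : ZMod p => Polynomial.eval x φ = 0) := by
      intro x hx
      simp only [Finset.mem_filter, mem_univ, true_and, Finset.mem_union] at hx ⊢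
      tauto
    have hroots : (univ.filter fun x : ZMod p => Polynomial.eval x φ = 0).card ≤ t :=
      le_trans (card_eval_zero_le hφ) hdeg
    have hchain := le_trans (Finset.card_le_card hsub) (Finset.card_union_le _ _)
    omega

lemma step {m : ℕ} (f : MvPolynomial (Fin (m+1)) (ZMod p)) (hf : f ≠ 0)
    (hred : ∀ i, f.degreeOf i ≤ p - 1) {r : ℕ} (hr : r ≤ (m+1)*(p-1))
    (hdeg : f.totalDegree ≤ r)
    (IH : ∀ r' : ℕ, r' ≤ m * (p-1) → ∀ g : MvPolynomial (Fin m) (ZMod p), g ≠ 0 →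
      (∀ i, g.degreeOf i ≤ p-1) → g.totalDegree ≤ r' → ∀ w' : ℤ,
      Dc p m r' w' ≤ (univ.filter fun u : Fin m → ZMod p =>
        w' < (manhattanWeight u : ℤ) ∧ eval u g ≠ 0).card)
    (w : ℤ) :
    Dc p (m+1) r w ≤ (univ.filter fun v : Fin (m+1) → ZMod p =>
      w < (manhattanWeight v : ℤ) ∧ eval v f ≠ 0).card := by
  have hp2 : 2 ≤ p := hp.out.two_le
  have hFne : MvPolynomial.finSuccEquiv (ZMod p) m f ≠ 0 := by
    intro h
    apply hf
    have h3 := congrArg (MvPolynomial.finSuccEquiv (ZMod p) m).symm h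
    simpa using h3
  set F := MvPolynomial.finSuccEquiv (ZMod p) m f with hF
  have htp : F.natDegree ≤ p - 1 := by
    rw [hF, MvPolynomial.natDegree_finSuccEquiv]
    exact hred 0
  have hgne : F.coeff F.natDegree ≠ 0 := by
    rw [← Polynomial.leadingCoeff]
    exact Polynomial.leadingCoeff_ne_zero.2 hFne
  have hgt : (F.coeff F.natDegree).totalDegree + F.natDegree ≤ r := by
    refine le_trans ?_ hdeg
    rw [hF]
    exact MvPolynomial.totalDegree_coeff_finSuccEquiv_add_le f _ (by rw [← hF]; exact hgne)
  have htr : F.natDegree ≤ r := by omega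
  have hgred : ∀ j, (F.coeff F.natDegree).degreeOf j ≤ p - 1 := by
    intro j
    refine le_trans ?_ (hred j.succ)
    rw [hF]
    exact MvPolynomial.degreeOf_coeff_finSuccEquiv f j _
  have hgm : (F.coeff F.natDegree).totalDegree ≤ m * (p-1) :=
    totalDegree_le_reduced _ hgred
  have hgρ : (F.coeff F.natDegree).totalDegree
      ≤ min (r - F.natDegree) (m * (p-1)) := le_min (by omega) hgm
  have heval : ∀ (x : ZMod p) (u : Fin m → ZMod p),
      eval (Fin.cons x u) f = Polynomial.eval x (F.map (eval u)) := by
    intro x u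
    rw [hF]
    exact MvPolynomial.eval_eq_eval_mv_eval' u x f
  -- the per-fiber inequality
  have hperu : ∀ u : Fin m → ZMod p,
      (∑ n ∈ Finset.range (p - F.natDegree),
        if w - n < (manhattanWeight u : ℤ) ∧ eval u (F.coeff F.natDegree) ≠ 0
        then 1 else 0)
      ≤ ∑ x : ZMod p,
        if w < ((manhattanWeight (Fin.cons x u) : ℕ) : ℤ) ∧ eval (Fin.cons x u) f ≠ 0
        then 1 else 0 := by
    intro u
    rcases eq_or_ne (eval u (F.coeff F.natDegree)) 0 with hu | hu
    · have : (∑ n ∈ Finset.range (p - F.natDegree),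
          if w - n < (manhattanWeight u : ℤ) ∧ eval u (F.coeff F.natDegree) ≠ 0
          then 1 else 0) = 0 :=
        Finset.sum_eq_zero fun n _ => by
          rw [if_neg]
          rintro ⟨-, h2⟩
          exact h2 hu
      rw [this]
      exact Nat.zero_le _
    · -- LHS as a card
      have hL : (∑ n ∈ Finset.range (p - F.natDegree),
          if w - n < (manhattanWeight u : ℤ) ∧ eval u (F.coeff F.natDegree) ≠ 0
          then 1 else 0)
          = ((Finset.range (p - F.natDegree)).filter
              fun n : ℕ => (w - (manhattanWeight u : ℤ)) < (n:ℤ)).card := by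
        rw [Finset.card_filter]
        refine Finset.sum_congr rfl fun n _ => ?_
        have hiff : (w - n < (manhattanWeight u : ℤ) ∧
            eval u (F.coeff F.natDegree) ≠ 0)
            ↔ (w - (manhattanWeight u : ℤ)) < (n:ℤ) := by
          constructor
          · rintro ⟨h1, -⟩; omega
          · intro h1; exact ⟨by omega, hu⟩
        simp only [hiff]
      have hR : (∑ x : ZMod p,
          if w < ((manhattanWeight (Fin.cons x u) : ℕ) : ℤ) ∧
            eval (Fin.cons x u) f ≠ 0 then 1 else 0)
          = (univ.filter fun x : ZMod p =>
              (w - (manhattanWeight u : ℤ)) < (x.val : ℤ) ∧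
              Polynomial.eval x (F.map (eval u)) ≠ 0).card := by
        rw [Finset.card_filter]
        refine Finset.sum_congr rfl fun x _ => ?_
        have hiff : (w < ((manhattanWeight (Fin.cons x u) : ℕ) : ℤ) ∧
            eval (Fin.cons x u) f ≠ 0)
            ↔ ((w - (manhattanWeight u : ℤ)) < (x.val : ℤ) ∧
              Polynomial.eval x (F.map (eval u)) ≠ 0) := by
          rw [weight_cons, heval x u]
          constructor
          · rintro ⟨h1, h2⟩
            refine ⟨?_, h2⟩
            push_cast at h1 ⊢
            omega
          · rintro ⟨h1, h2⟩
            refine ⟨?_, h2⟩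
            push_cast at h1 ⊢
            omega
        simp only [hiff]
      rw [hL, hR]
      apply univar (F.map (eval u)) F.natDegree htp
      · exact Polynomial.natDegree_map_le
      · rw [Polynomial.coeff_map]
        exact hu
  -- assemble
  calc Dc p (m+1) r w
      ≤ ∑ n ∈ Finset.range (p - F.natDegree),
        Dc p m (min (r - F.natDegree) (m * (p-1))) (w - n) := star hr htp htr w
    _ ≤ ∑ n ∈ Finset.range (p - F.natDegree),
        (univ.filter fun u : Fin m → ZMod p =>
          (w - n) < (manhattanWeight u : ℤ) ∧ eval u (F.coeff F.natDegree) ≠ 0).card :=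
        Finset.sum_le_sum fun n _ =>
          IH _ (min_le_right _ _) _ hgne hgred hgρ (w - n)
    _ = ∑ n ∈ Finset.range (p - F.natDegree), ∑ u : Fin m → ZMod p,
        if w - n < (manhattanWeight u : ℤ) ∧ eval u (F.coeff F.natDegree) ≠ 0
        then 1 else 0 :=
        Finset.sum_congr rfl fun n _ => Finset.card_filter _ _
    _ = ∑ u : Fin m → ZMod p, ∑ n ∈ Finset.range (p - F.natDegree),
        if w - n < (manhattanWeight u : ℤ) ∧ eval u (F.coeff F.natDegree) ≠ 0
        then 1 else 0 := Finset.sum_comm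
    _ ≤ ∑ u : Fin m → ZMod p, ∑ x : ZMod p,
        if w < ((manhattanWeight (Fin.cons x u) : ℕ) : ℤ) ∧
          eval (Fin.cons x u) f ≠ 0 then 1 else 0 :=
        Finset.sum_le_sum fun u _ => hperu u
    _ = ∑ x : ZMod p, ∑ u : Fin m → ZMod p,
        if w < ((manhattanWeight (Fin.cons x u) : ℕ) : ℤ) ∧
          eval (Fin.cons x u) f ≠ 0 then 1 else 0 := Finset.sum_comm
    _ = (univ.filter fun v : Fin (m+1) → ZMod p =>
        w < (manhattanWeight v : ℤ) ∧ eval v f ≠ 0).card := by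
        rw [Finset.card_filter, sum_pi_succ]

lemma lower : ∀ m r : ℕ, r ≤ m * (p-1) → ∀ f : MvPolynomial (Fin m) (ZMod p),
    f ≠ 0 → (∀ i, f.degreeOf i ≤ p - 1) → f.totalDegree ≤ r → ∀ w : ℤ,
    Dc p m r w ≤ (univ.filter fun v : Fin m → ZMod p =>
      w < (manhattanWeight v : ℤ) ∧ eval v f ≠ 0).card := by
  intro m
  induction m with
  | zero =>
    intro r hr f hf hred hdeg w
    have hr0 : r = 0 := by omega
    obtain ⟨c, rfl⟩ := MvPolynomial.C_surjective (Fin 0) f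
    have hc : c ≠ 0 := fun h => hf (by rw [h, map_zero])
    rw [hr0, Dc_zero_r, G_zero]
    split_ifs with hw
    · refine Finset.card_pos.2 ⟨(fun i => i.elim0), ?_⟩
      rw [Finset.mem_filter]
      refine ⟨Finset.mem_univ _, ?_, by simp [hc]⟩
      simpa [manhattanWeight] using hw
    · exact Nat.zero_le _
  | succ m ih =>
    intro r hr f hf hred hdeg w
    exact step f hf hred hr hdeg (fun r' hr' g hg hgred hgdeg w' =>
      ih r' hr' g hg hgred hgdeg w') w

variable (p) in
def bad (r : ℕ) {m : ℕ} (i : Fin m) : Finset (ZMod p) :=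
  univ.filter fun c => ((i:ℕ)+1) * (p-1) - r < c.val

variable (p) in
noncomputable def fstar (r m : ℕ) : MvPolynomial (Fin m) (ZMod p) :=
  ∏ i : Fin m, ∏ c ∈ bad p r i, (MvPolynomial.X i - MvPolynomial.C c)

lemma eval_fstar_ne_zero_iff {r m : ℕ} (v : Fin m → ZMod p) :
    eval v (fstar p r m) ≠ 0 ↔ inS p r v := by
  unfold fstar
  rw [map_prod]
  rw [Finset.prod_ne_zero_iff]
  constructor
  · intro h i
    by_contra hc
    push_neg at hc
    have hv : v i ∈ bad p r i := by
      simp only [bad, Finset.mem_filter, mem_univ, true_and]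
      exact hc
    have := h i (Finset.mem_univ i)
    rw [map_prod, Finset.prod_ne_zero_iff] at this
    have h2 := this (v i) hv
    simp at h2
  · intro h i _
    rw [map_prod, Finset.prod_ne_zero_iff]
    intro c hc
    simp only [bad, Finset.mem_filter, mem_univ, true_and] at hc
    simp only [map_sub, MvPolynomial.eval_X, MvPolynomial.eval_C]
    intro h2
    have hvc : v i = c := by linear_combination h2
    have h3 := h i
    rw [hvc] at h3
    omega

lemma fstar_ne_zero (r m : ℕ) : fstar p r m ≠ 0 := by
  intro h
  have h1 : eval (fun _ => (0 : ZMod p)) (fstar p r m) ≠ 0 := by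
    rw [eval_fstar_ne_zero_iff]
    intro i
    rw [ZMod.val_zero]
    exact Nat.zero_le _
  rw [h, map_zero] at h1
  exact h1 rfl

lemma card_bad {r m : ℕ} (i : Fin m) :
    (bad p r i).card = p - 1 - min (((i:ℕ)+1) * (p-1) - r) (p-1) := by
  have hp2 : 2 ≤ p := hp.out.two_le
  unfold bad
  rw [card_val_filter (q := fun n => ((i:ℕ)+1) * (p-1) - r < n)]
  have h : (Finset.range p).filter (fun n => ((i:ℕ)+1) * (p-1) - r < n)
      = Finset.Ico (min (((i:ℕ)+1) * (p-1) - r) (p-1) + 1) p := by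
    ext n
    simp only [Finset.mem_filter, Finset.mem_range, Finset.mem_Ico]
    omega
  rw [h, Nat.card_Ico]
  omega

lemma card_bad_le {r m : ℕ} (i : Fin m) : (bad p r i).card ≤ p - 1 := by
  rw [card_bad]
  omega

lemma degreeOf_fstar (r m : ℕ) (j : Fin m) :
    (fstar p r m).degreeOf j ≤ p - 1 := by
  unfold fstar
  refine le_trans (MvPolynomial.degreeOf_prod_le j univ _) ?_
  have hterm : ∀ i : Fin m,
      MvPolynomial.degreeOf j (∏ c ∈ bad p r i, (MvPolynomial.X i - MvPolynomial.C c))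
        ≤ if i = j then p - 1 else 0 := by
    intro i
    refine le_trans (MvPolynomial.degreeOf_prod_le j (bad p r i) _) ?_
    have hfac : ∀ c : ZMod p,
        MvPolynomial.degreeOf j (MvPolynomial.X i - MvPolynomial.C c)
          ≤ if i = j then 1 else 0 := by
      intro c
      refine le_trans (MvPolynomial.degreeOf_sub_le j _ _) ?_
      rw [MvPolynomial.degreeOf_C, MvPolynomial.degreeOf_X]
      rcases eq_or_ne i j with h | h
      · subst h; simp
      · simp [Ne.symm h, h]
    calc ∑ c ∈ bad p r i, MvPolynomial.degreeOf j (MvPolynomial.X i - MvPolynomial.C c)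
        ≤ ∑ _c ∈ bad p r i, (if i = j then 1 else 0) :=
          Finset.sum_le_sum fun c _ => hfac c
      _ = (bad p r i).card * (if i = j then 1 else 0) := by
          rw [Finset.sum_const, smul_eq_mul]
      _ ≤ if i = j then p - 1 else 0 := by
          rcases eq_or_ne i j with h | h
          · simp only [h, if_true, mul_one]
            exact card_bad_le j
          · simp [h]
  refine le_trans (Finset.sum_le_sum fun i _ => hterm i) ?_
  rw [Finset.sum_ite_eq' univ j (fun _ => p - 1)]
  simp

lemma sum_card_bad {r m : ℕ} (hr : r ≤ m * (p-1)) :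
    ∑ i : Fin m, (bad p r i).card = r := by
  have hp2 : 2 ≤ p := hp.out.two_le
  have hterm : ∀ i : Fin m, (bad p r i).card
      = min r (((i:ℕ)+1) * (p-1)) - min r ((i:ℕ) * (p-1)) := by
    intro i
    rw [card_bad]
    have e : ((i:ℕ)+1) * (p-1) = (i:ℕ) * (p-1) + (p-1) := Nat.succ_mul _ _
    omega
  rw [Finset.sum_congr rfl fun i _ => hterm i]
  rw [Fin.sum_univ_eq_sum_range (fun i => min r ((i+1) * (p-1)) - min r (i * (p-1)))]
  have hmono : Monotone (fun i : ℕ => min r (i * (p-1))) := by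
    intro a b hab
    exact min_le_min le_rfl (Nat.mul_le_mul_right _ hab)
  rw [Finset.sum_range_tsub hmono m]
  simp only [Nat.zero_mul, Nat.min_zero]
  omega

lemma totalDegree_fstar {r m : ℕ} (hr : r ≤ m * (p-1)) :
    (fstar p r m).totalDegree ≤ r := by
  unfold fstar
  refine le_trans (MvPolynomial.totalDegree_finset_prod univ _) ?_
  have hterm : ∀ i : Fin m,
      (∏ c ∈ bad p r i, (MvPolynomial.X i - MvPolynomial.C c :
        MvPolynomial (Fin m) (ZMod p))).totalDegree ≤ (bad p r i).card := by
    intro i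
    refine le_trans (MvPolynomial.totalDegree_finset_prod (bad p r i) _) ?_
    have hfac : ∀ c : ZMod p,
        (MvPolynomial.X i - MvPolynomial.C c : MvPolynomial (Fin m) (ZMod p)).totalDegree
          ≤ 1 := by
      intro c
      refine le_trans (MvPolynomial.totalDegree_sub _ _) ?_
      rw [MvPolynomial.totalDegree_X, MvPolynomial.totalDegree_C]
      simp
    calc ∑ c ∈ bad p r i, (MvPolynomial.X i - MvPolynomial.C c :
          MvPolynomial (Fin m) (ZMod p)).totalDegree
        ≤ ∑ _c ∈ bad p r i, 1 := Finset.sum_le_sum fun c _ => hfac c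
      _ = (bad p r i).card := by simp
  calc ∑ i : Fin m, (∏ c ∈ bad p r i, (MvPolynomial.X i - MvPolynomial.C c :
        MvPolynomial (Fin m) (ZMod p))).totalDegree
      ≤ ∑ i : Fin m, (bad p r i).card := Finset.sum_le_sum fun i _ => hterm i
    _ = r := sum_card_bad hr

lemma fstar_count {r m : ℕ} (w : ℤ) :
    (univ.filter fun v : Fin m → ZMod p =>
      w < (manhattanWeight v : ℤ) ∧ eval v (fstar p r m) ≠ 0).card = Dc p m r w := by
  unfold Dc
  congr 1
  apply Finset.filter_congr
  intro v _
  rw [eval_fstar_ne_zero_iff]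
  exact and_comm

end PRMaux

/-- If `Δ_p(m,r,w) > 0`, then the minimum of
`#{v ∈ 𝔽_p^m : |v|_M > w ∧ f(v) ≠ 0}` over all nonzero reduced polynomials `f`
of total degree at most `r` equals `Δ_p(m,r,w)`: the distance of the punctured
Reed–Muller code `PRM_p(r,m,w)` is `Δ_p(m,r,w)`. -/
theorem punctured_reedMuller_distance (p m r : ℕ) [Fact p.Prime]
    (hm : 1 ≤ m) (hr : r ≤ m * (p - 1)) (w : ℤ)
    (hΔ : 0 < Δp p m r w) :
    IsLeast {n : ℤ | ∃ f : MvPolynomial (Fin m) (ZMod p), f ≠ 0 ∧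
        (∀ i, f.degreeOf i ≤ p - 1) ∧ f.totalDegree ≤ r ∧
        n = ((Finset.univ.filter fun v : Fin m → ZMod p =>
          w < (manhattanWeight v : ℤ) ∧ MvPolynomial.eval v f ≠ 0).card : ℤ)}
      (Δp p m r w) := by
  constructor
  · exact ⟨PRMaux.fstar p r m, PRMaux.fstar_ne_zero r m,
      PRMaux.degreeOf_fstar r m, PRMaux.totalDegree_fstar hr, by
        rw [PRMaux.fstar_count w, ← PRMaux.Δp_eq_Dc hr w]⟩
  · rintro n ⟨f, hf, hred, hdeg, rfl⟩
    rw [PRMaux.Δp_eq_Dc hr w]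
    exact_mod_cast PRMaux.lower m r hr f hf hred hdeg w
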